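/- Let G be a graph on vertices {v_1,...,v_n} and let D be an orientation of G in which v_i has out-degree d_i. For each i and each 1 ≤ j ≤ d_i fix an arbitrary real number u^i_j. Then the coefficient of ∏_{i=1}^n x_i^{d_i} in the graph polynomial P_G is nonzero if and only if ∑_{A ⊆ E(D)} (-1)^{|A|} ∏_{i=1}^n ∏_{j=1}^{d_i} ((d_A^+(v_i) − d_A^−(v_i)) − u^i_j) ≠ 0. -/

import Mathlib

open MvPolynomial Finset

/-- The graph polynomial `P_G = ∏_{(i,j) ∈ E, i < j} (xᵢ - xⱼ)`. -/
noncomputable def graphPoly {V : Type} [Fintype V] [LinearOrder V] (G : SimpleGraph V)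
    [DecidableRel G.Adj] : MvPolynomial V ℝ :=
  ∏ p ∈ Finset.univ.filter (fun p : V × V => p.1 < p.2 ∧ G.Adj p.1 p.2), (X p.1 - X p.2)

/-- `G` is Alon–Tarsi `k`-choosable: `P_G` has a monomial with non-zero coefficient all of whose
exponents are at most `k - 1`. -/
def IsAT {V : Type} [Fintype V] [LinearOrder V] (G : SimpleGraph V) [DecidableRel G.Adj]
    (k : ℕ) : Prop :=
  ∃ t : V →₀ ℕ, (graphPoly G).coeff t ≠ 0 ∧ ∀ i, t i + 1 ≤ k

/-- The Alon–Tarsi number of `G`: the least `k` such that `G` is Alon–Tarsi `k`-choosable. -/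
noncomputable def ATnum {V : Type} [Fintype V] [LinearOrder V] (G : SimpleGraph V)
    [DecidableRel G.Adj] : ℕ :=
  sInf {k | IsAT G k}

/-- Out-degree of `v` in a set `A` of arcs. -/
def outdeg {n : ℕ} (A : Finset (Fin n × Fin n)) (v : Fin n) : ℕ :=
  (A.filter fun e => e.1 = v).card

/-- In-degree of `v` in a set `A` of arcs. -/
def indeg {n : ℕ} (A : Finset (Fin n × Fin n)) (v : Fin n) : ℕ :=
  (A.filter fun e => e.2 = v).card

open scoped Polynomial

lemma eval_of_natDegree_le_one (q : ℝ[X]) (h : q.natDegree ≤ 1) (a : ℝ) :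
    q.eval a = q.coeff 0 + q.coeff 1 * a := by
  rw [Polynomial.eval_eq_sum_range' (show q.natDegree < 2 by omega) a]
  rw [Finset.sum_range_succ, Finset.sum_range_one]
  ring

lemma taylor_coeff_of_le (p : ℝ[X]) (a : ℝ) (m : ℕ) (h : p.natDegree ≤ m) :
    (Polynomial.taylor a p).coeff m = p.coeff m := by
  rw [Polynomial.taylor_coeff]
  have h0 : (Polynomial.hasseDeriv m p).natDegree ≤ 0 :=
    le_trans (Polynomial.natDegree_hasseDeriv_le _ _) (by omega)
  rw [Polynomial.eq_C_of_natDegree_le_zero h0, Polynomial.eval_C,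
    Polynomial.hasseDeriv_coeff]
  simp

lemma taylor_coeff_pred (p : ℝ[X]) (a : ℝ) (dd : ℕ) (h : p.natDegree ≤ dd) (h1 : 1 ≤ dd) :
    (Polynomial.taylor a p).coeff (dd - 1) = p.coeff (dd - 1) + dd * p.coeff dd * a := by
  rw [Polynomial.taylor_coeff]
  have h0 : (Polynomial.hasseDeriv (dd-1) p).natDegree ≤ 1 :=
    le_trans (Polynomial.natDegree_hasseDeriv_le _ _) (by omega)
  rw [eval_of_natDegree_le_one _ h0, Polynomial.hasseDeriv_coeff, Polynomial.hasseDeriv_coeff]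
  have h2 : 1 + (dd - 1) = dd := by omega
  have h3 : 0 + (dd - 1) = dd - 1 := by omega
  rw [h2, h3]
  have h4 : dd.choose (dd - 1) = dd := by
    have := Nat.choose_symm (n := dd) (k := 1) (by omega)
    rw [Nat.choose_one_right] at this
    omega
  rw [h4]
  simp

lemma natDegree_sub_taylor_le (p : ℝ[X]) (a : ℝ) (dd : ℕ) (h : p.natDegree ≤ dd) :
    (p - Polynomial.taylor a p).natDegree ≤ dd - 1 := by
  rw [Polynomial.natDegree_le_iff_coeff_eq_zero]
  intro m hm
  rw [Polynomial.coeff_sub, taylor_coeff_of_le p a m (le_trans h (by omega)), sub_self]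

lemma outdeg_insert {n : ℕ} (e0 : Fin n × Fin n) (A : Finset (Fin n × Fin n)) (h : e0 ∉ A)
    (i : Fin n) : outdeg (insert e0 A) i = outdeg A i + if e0.1 = i then 1 else 0 := by
  unfold outdeg
  rw [Finset.filter_insert]
  split
  · rw [Finset.card_insert_of_notMem (fun hc => h (Finset.mem_filter.1 hc).1)]
  · omega

lemma indeg_insert {n : ℕ} (e0 : Fin n × Fin n) (A : Finset (Fin n × Fin n)) (h : e0 ∉ A)
    (i : Fin n) : indeg (insert e0 A) i = indeg A i + if e0.2 = i then 1 else 0 := by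
  unfold indeg
  rw [Finset.filter_insert]
  split
  · rw [Finset.card_insert_of_notMem (fun hc => h (Finset.mem_filter.1 hc).1)]
  · omega

lemma master {n : ℕ} : ∀ (E : Finset (Fin n × Fin n)), (∀ e ∈ E, e.1 ≠ e.2) →
    ∀ (p : Fin n → Polynomial ℝ) (d : Fin n → ℕ),
    (∀ i, (p i).natDegree ≤ d i) → (∑ i, d i = E.card) →
    ∑ A ∈ E.powerset, (-1 : ℝ) ^ A.card *
      ∏ i, (p i).eval ((outdeg A i : ℝ) - (indeg A i : ℝ)) =
    (-1 : ℝ) ^ E.card * (∏ i, ((d i).factorial : ℝ) * (p i).coeff (d i)) *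
      MvPolynomial.coeff (Finsupp.equivFunOnFinite.symm d)
        (∏ e ∈ E, (MvPolynomial.X e.1 - MvPolynomial.X e.2 : MvPolynomial (Fin n) ℝ)) := by
  intro E
  induction E using Finset.induction_on with
  | empty =>
    intro _ p d hdeg hsum
    have hd0 : ∀ i, d i = 0 := by simpa using hsum
    have ht0 : (Finsupp.equivFunOnFinite.symm d) = 0 := by
      ext i
      simp [hd0 i]
    simp only [Finset.powerset_empty, Finset.sum_singleton, Finset.card_empty, pow_zero,
      Finset.prod_empty, one_mul, ht0]
    rw [MvPolynomial.coeff_zero_one, mul_one]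
    apply Finset.prod_congr rfl
    intro i _
    have hc : p i = Polynomial.C ((p i).coeff 0) :=
      Polynomial.eq_C_of_natDegree_le_zero (le_trans (hdeg i) (le_of_eq (hd0 i)))
    rw [hd0 i]
    conv_lhs => rw [hc]
    simp [Nat.factorial_zero]
  | @insert e0 E he0 ih =>
    intro hE p d hdeg hsum
    classical
    have hst : e0.1 ≠ e0.2 := hE e0 (Finset.mem_insert_self _ _)
    have hE' : ∀ e ∈ E, e.1 ≠ e.2 := fun e he => hE e (Finset.mem_insert_of_mem he)
    have hcard : (insert e0 E).card = E.card + 1 := Finset.card_insert_of_notMem he0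
    set Q : MvPolynomial (Fin n) ℝ := ∏ e ∈ E, (MvPolynomial.X e.1 - MvPolynomial.X e.2)
      with hQdef
    set P1 : Fin n → ℝ[X] :=
      Function.update p e0.2 (p e0.2 - Polynomial.taylor (-1) (p e0.2)) with hP1def
    set P2 : Fin n → ℝ[X] :=
      Function.update (Function.update p e0.2 (Polynomial.taylor (-1) (p e0.2))) e0.1
        (p e0.1 - Polynomial.taylor 1 (p e0.1)) with hP2def
    have hprodsplit : ∀ f : Fin n → ℝ, ∏ i, f i =
        f e0.1 * (f e0.2 * ∏ i ∈ (Finset.univ.erase e0.1).erase e0.2, f i) := by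
      intro f
      rw [← Finset.mul_prod_erase Finset.univ f (Finset.mem_univ e0.1),
        ← Finset.mul_prod_erase (Finset.univ.erase e0.1) f
          (Finset.mem_erase.2 ⟨Ne.symm hst, Finset.mem_univ _⟩)]
    have hsplit : ∀ A ∈ E.powerset,
        (-1 : ℝ) ^ A.card * ∏ i, (p i).eval ((outdeg A i : ℝ) - (indeg A i : ℝ)) +
        (-1 : ℝ) ^ (insert e0 A).card *
          ∏ i, (p i).eval ((outdeg (insert e0 A) i : ℝ) - (indeg (insert e0 A) i : ℝ)) =
        (-1 : ℝ) ^ A.card * ∏ i, (P1 i).eval ((outdeg A i : ℝ) - (indeg A i : ℝ)) +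
        (-1 : ℝ) ^ A.card * ∏ i, (P2 i).eval ((outdeg A i : ℝ) - (indeg A i : ℝ)) := by
      intro A hA
      have heA : e0 ∉ A := fun h => he0 (Finset.mem_powerset.1 hA h)
      have hAcard : (insert e0 A).card = A.card + 1 := Finset.card_insert_of_notMem heA
      have hw : ∀ i, ((outdeg (insert e0 A) i : ℝ) - (indeg (insert e0 A) i : ℝ)) =
          ((outdeg A i : ℝ) - (indeg A i : ℝ)) +
            ((if e0.1 = i then (1:ℝ) else 0) - (if e0.2 = i then (1:ℝ) else 0)) := by
        intro i
        rw [outdeg_insert e0 A heA i, indeg_insert e0 A heA i]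
        split_ifs <;> push_cast <;> ring
      simp only [hw, hAcard, pow_succ]
      have main : ∏ i, (p i).eval ((outdeg A i : ℝ) - (indeg A i : ℝ)) -
          ∏ i, (p i).eval (((outdeg A i : ℝ) - (indeg A i : ℝ)) +
            ((if e0.1 = i then (1:ℝ) else 0) - (if e0.2 = i then (1:ℝ) else 0))) =
          ∏ i, (P1 i).eval ((outdeg A i : ℝ) - (indeg A i : ℝ)) +
          ∏ i, (P2 i).eval ((outdeg A i : ℝ) - (indeg A i : ℝ)) := by
        rw [hprodsplit, hprodsplit, hprodsplit, hprodsplit]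
        have hRrest : ∏ i ∈ (Finset.univ.erase e0.1).erase e0.2,
            (p i).eval (((outdeg A i : ℝ) - (indeg A i : ℝ)) +
              ((if e0.1 = i then (1:ℝ) else 0) - (if e0.2 = i then (1:ℝ) else 0))) =
            ∏ i ∈ (Finset.univ.erase e0.1).erase e0.2,
              (p i).eval ((outdeg A i : ℝ) - (indeg A i : ℝ)) := by
          refine Finset.prod_congr rfl fun i hi => ?_
          obtain ⟨hi2, hi'⟩ := Finset.mem_erase.1 hi
          obtain ⟨hi1, -⟩ := Finset.mem_erase.1 hi'
          rw [if_neg (fun h => hi1 h.symm), if_neg (fun h => hi2 h.symm)]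
          norm_num
        have hP1rest : ∏ i ∈ (Finset.univ.erase e0.1).erase e0.2,
            (P1 i).eval ((outdeg A i : ℝ) - (indeg A i : ℝ)) =
            ∏ i ∈ (Finset.univ.erase e0.1).erase e0.2,
              (p i).eval ((outdeg A i : ℝ) - (indeg A i : ℝ)) := by
          refine Finset.prod_congr rfl fun i hi => ?_
          obtain ⟨hi2, -⟩ := Finset.mem_erase.1 hi
          rw [hP1def, Function.update_of_ne hi2]
        have hP2rest : ∏ i ∈ (Finset.univ.erase e0.1).erase e0.2,
            (P2 i).eval ((outdeg A i : ℝ) - (indeg A i : ℝ)) =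
            ∏ i ∈ (Finset.univ.erase e0.1).erase e0.2,
              (p i).eval ((outdeg A i : ℝ) - (indeg A i : ℝ)) := by
          refine Finset.prod_congr rfl fun i hi => ?_
          obtain ⟨hi2, hi'⟩ := Finset.mem_erase.1 hi
          obtain ⟨hi1, -⟩ := Finset.mem_erase.1 hi'
          rw [hP2def, Function.update_of_ne hi1, Function.update_of_ne hi2]
        rw [hRrest, hP1rest, hP2rest]
        have c1 : ((if e0.1 = e0.1 then (1:ℝ) else 0) -
            (if e0.2 = e0.1 then (1:ℝ) else 0)) = 1 := by
          rw [if_pos rfl, if_neg (Ne.symm hst)]; ring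
        have c2 : ((if e0.1 = e0.2 then (1:ℝ) else 0) -
            (if e0.2 = e0.2 then (1:ℝ) else 0)) = -1 := by
          rw [if_neg hst, if_pos rfl]; ring
        rw [c1, c2]
        have u1 : P1 e0.1 = p e0.1 := by rw [hP1def, Function.update_of_ne hst]
        have u2 : P1 e0.2 = p e0.2 - Polynomial.taylor (-1) (p e0.2) := by
          rw [hP1def, Function.update_self]
        have u3 : P2 e0.1 = p e0.1 - Polynomial.taylor 1 (p e0.1) := by
          rw [hP2def, Function.update_self]
        have u4 : P2 e0.2 = Polynomial.taylor (-1) (p e0.2) := by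
          rw [hP2def, Function.update_of_ne (Ne.symm hst), Function.update_self]
        rw [u1, u2, u3, u4]
        simp only [Polynomial.eval_sub, Polynomial.taylor_eval]
        ring
      have hAc1 : (-1 : ℝ) ^ (A.card + 1) = (-1 : ℝ) ^ A.card * (-1) := by rw [pow_succ]
      linear_combination ((-1 : ℝ) ^ A.card) * main
    have hL : (∑ A ∈ E.powerset, (-1:ℝ)^A.card *
          ∏ i, (p i).eval ((outdeg A i : ℝ) - (indeg A i : ℝ))) +
        (∑ A ∈ E.powerset, (-1:ℝ)^(insert e0 A).card *
          ∏ i, (p i).eval ((outdeg (insert e0 A) i : ℝ) - (indeg (insert e0 A) i : ℝ))) =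
        (∑ A ∈ E.powerset, (-1:ℝ)^A.card *
          ∏ i, (P1 i).eval ((outdeg A i : ℝ) - (indeg A i : ℝ))) +
        (∑ A ∈ E.powerset, (-1:ℝ)^A.card *
          ∏ i, (P2 i).eval ((outdeg A i : ℝ) - (indeg A i : ℝ))) := by
      rw [← Finset.sum_add_distrib, ← Finset.sum_add_distrib]
      exact Finset.sum_congr rfl hsplit
    have hS1 : (∑ A ∈ E.powerset, (-1:ℝ)^A.card *
          ∏ i, (P1 i).eval ((outdeg A i : ℝ) - (indeg A i : ℝ))) =
        (-1:ℝ)^E.card * (∏ i, ((d i).factorial : ℝ) * (p i).coeff (d i)) *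
          MvPolynomial.coeff (Finsupp.equivFunOnFinite.symm d) (Q * MvPolynomial.X e0.2) := by
      by_cases hdt : d e0.2 = 0
      · have hpc : p e0.2 = Polynomial.C ((p e0.2).coeff 0) :=
          Polynomial.eq_C_of_natDegree_le_zero (hdt ▸ hdeg e0.2)
        have h1 : P1 e0.2 = 0 := by
          rw [hP1def, Function.update_self]
          conv_lhs => rw [hpc]
          rw [Polynomial.taylor_apply, Polynomial.C_comp, sub_self]
        have hzero : (∑ A ∈ E.powerset, (-1:ℝ)^A.card *
            ∏ i, (P1 i).eval ((outdeg A i : ℝ) - (indeg A i : ℝ))) = 0 := by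
          refine Finset.sum_eq_zero fun A _ => ?_
          rw [Finset.prod_eq_zero (Finset.mem_univ e0.2) (by rw [h1, Polynomial.eval_zero]),
            mul_zero]
        rw [hzero, MvPolynomial.coeff_mul_X', if_neg, mul_zero]
        simp [Finsupp.mem_support_iff, hdt]
      · set d1 : Fin n → ℕ := Function.update d e0.2 (d e0.2 - 1) with hd1def
        have hdeg1 : ∀ i, (P1 i).natDegree ≤ d1 i := by
          intro i
          rcases eq_or_ne i e0.2 with rfl | hne
          · rw [hP1def, hd1def, Function.update_self, Function.update_self]
            exact natDegree_sub_taylor_le _ _ _ (hdeg _)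
          · rw [hP1def, hd1def, Function.update_of_ne hne, Function.update_of_ne hne]
            exact hdeg i
        have hsum1 : ∑ i, d1 i = E.card := by
          have h1 : ∑ i, d1 i = (d e0.2 - 1) + ∑ i ∈ Finset.univ \ {e0.2}, d i := by
            rw [hd1def]; exact Finset.sum_update_of_mem (Finset.mem_univ e0.2) d _
          have h2 : ∑ i, d i = (∑ i ∈ Finset.univ \ {e0.2}, d i) + d e0.2 :=
            Finset.sum_eq_sum_sdiff_singleton_add (Finset.mem_univ e0.2) d
          rw [hcard] at hsum
          omega
        rw [ih hE' P1 d1 hdeg1 hsum1]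
        have hKP : (∏ i, ((d1 i).factorial : ℝ) * (P1 i).coeff (d1 i)) =
            ∏ i, ((d i).factorial : ℝ) * (p i).coeff (d i) := by
          rw [← Finset.mul_prod_erase Finset.univ
              (fun i => ((d1 i).factorial : ℝ) * (P1 i).coeff (d1 i)) (Finset.mem_univ e0.2),
            ← Finset.mul_prod_erase Finset.univ
              (fun i => ((d i).factorial : ℝ) * (p i).coeff (d i)) (Finset.mem_univ e0.2)]
          congr 1
          · simp only [hP1def, hd1def, Function.update_self]
            rw [Polynomial.coeff_sub,
              taylor_coeff_pred (p e0.2) (-1) (d e0.2) (hdeg _) (by omega)]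
            have hfac : ((d e0.2 - 1).factorial : ℝ) * (d e0.2) = (d e0.2).factorial := by
              rw [← Nat.mul_factorial_pred hdt]
              push_cast; ring
            linear_combination (p e0.2).coeff (d e0.2) * hfac
          · refine Finset.prod_congr rfl fun i hi => ?_
            have hne : i ≠ e0.2 := (Finset.mem_erase.1 hi).1
            rw [hP1def, hd1def, Function.update_of_ne hne, Function.update_of_ne hne]
        have hcoeff : MvPolynomial.coeff (Finsupp.equivFunOnFinite.symm d)
            (Q * MvPolynomial.X e0.2) =
            MvPolynomial.coeff (Finsupp.equivFunOnFinite.symm d1) Q := by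
          rw [MvPolynomial.coeff_mul_X', if_pos]
          · congr 1
            ext i
            rw [Finsupp.tsub_apply]
            rcases eq_or_ne i e0.2 with rfl | hne
            · simp [hd1def, Finsupp.single_apply]
            · simp [hd1def, Finsupp.single_apply, Ne.symm hne, Function.update_of_ne hne]
          · simp [Finsupp.mem_support_iff, hdt]
        rw [hKP, hcoeff]
    have hS2 : (∑ A ∈ E.powerset, (-1:ℝ)^A.card *
          ∏ i, (P2 i).eval ((outdeg A i : ℝ) - (indeg A i : ℝ))) =
        -((-1:ℝ)^E.card * (∏ i, ((d i).factorial : ℝ) * (p i).coeff (d i)) *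
          MvPolynomial.coeff (Finsupp.equivFunOnFinite.symm d) (Q * MvPolynomial.X e0.1)) := by
      by_cases hds : d e0.1 = 0
      · have hpc : p e0.1 = Polynomial.C ((p e0.1).coeff 0) :=
          Polynomial.eq_C_of_natDegree_le_zero (hds ▸ hdeg e0.1)
        have h1 : P2 e0.1 = 0 := by
          rw [hP2def, Function.update_self]
          conv_lhs => rw [hpc]
          rw [Polynomial.taylor_apply, Polynomial.C_comp, sub_self]
        have hzero : (∑ A ∈ E.powerset, (-1:ℝ)^A.card *
            ∏ i, (P2 i).eval ((outdeg A i : ℝ) - (indeg A i : ℝ))) = 0 := by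
          refine Finset.sum_eq_zero fun A _ => ?_
          rw [Finset.prod_eq_zero (Finset.mem_univ e0.1) (by rw [h1, Polynomial.eval_zero]),
            mul_zero]
        rw [hzero, MvPolynomial.coeff_mul_X', if_neg, mul_zero, neg_zero]
        simp [Finsupp.mem_support_iff, hds]
      · set d2 : Fin n → ℕ := Function.update d e0.1 (d e0.1 - 1) with hd2def
        have hdeg2 : ∀ i, (P2 i).natDegree ≤ d2 i := by
          intro i
          rcases eq_or_ne i e0.1 with rfl | hne1
          · rw [hP2def, hd2def, Function.update_self, Function.update_self]
            exact natDegree_sub_taylor_le _ _ _ (hdeg _)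
          · rw [hP2def, hd2def, Function.update_of_ne hne1, Function.update_of_ne hne1]
            rcases eq_or_ne i e0.2 with rfl | hne2
            · rw [Function.update_self, Polynomial.natDegree_taylor]
              exact hdeg _
            · rw [Function.update_of_ne hne2]
              exact hdeg i
        have hsum2 : ∑ i, d2 i = E.card := by
          have h1 : ∑ i, d2 i = (d e0.1 - 1) + ∑ i ∈ Finset.univ \ {e0.1}, d i := by
            rw [hd2def]; exact Finset.sum_update_of_mem (Finset.mem_univ e0.1) d _
          have h2 : ∑ i, d i = (∑ i ∈ Finset.univ \ {e0.1}, d i) + d e0.1 :=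
            Finset.sum_eq_sum_sdiff_singleton_add (Finset.mem_univ e0.1) d
          rw [hcard] at hsum
          omega
        rw [ih hE' P2 d2 hdeg2 hsum2]
        have hKP2 : (∏ i, ((d2 i).factorial : ℝ) * (P2 i).coeff (d2 i)) =
            -∏ i, ((d i).factorial : ℝ) * (p i).coeff (d i) := by
          rw [← Finset.mul_prod_erase Finset.univ
              (fun i => ((d2 i).factorial : ℝ) * (P2 i).coeff (d2 i)) (Finset.mem_univ e0.1),
            ← Finset.mul_prod_erase Finset.univ
              (fun i => ((d i).factorial : ℝ) * (p i).coeff (d i)) (Finset.mem_univ e0.1)]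
          have hrest : ∏ i ∈ Finset.univ.erase e0.1,
              ((d2 i).factorial : ℝ) * (P2 i).coeff (d2 i) =
              ∏ i ∈ Finset.univ.erase e0.1,
              ((d i).factorial : ℝ) * (p i).coeff (d i) := by
            rw [← Finset.mul_prod_erase (Finset.univ.erase e0.1)
                (fun i => ((d2 i).factorial : ℝ) * (P2 i).coeff (d2 i))
                (Finset.mem_erase.2 ⟨Ne.symm hst, Finset.mem_univ _⟩),
              ← Finset.mul_prod_erase (Finset.univ.erase e0.1)
                (fun i => ((d i).factorial : ℝ) * (p i).coeff (d i))
                (Finset.mem_erase.2 ⟨Ne.symm hst, Finset.mem_univ _⟩)]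
            congr 1
            · simp only [hP2def, hd2def, Function.update_of_ne (Ne.symm hst),
                Function.update_self]
              rw [taylor_coeff_of_le _ _ _ (hdeg e0.2)]
            · refine Finset.prod_congr rfl fun i hi => ?_
              obtain ⟨hi2, hi'⟩ := Finset.mem_erase.1 hi
              obtain ⟨hi1, -⟩ := Finset.mem_erase.1 hi'
              rw [hP2def, hd2def, Function.update_of_ne hi1, Function.update_of_ne hi1,
                Function.update_of_ne hi2]
          rw [hrest]
          have hhead : ((d2 e0.1).factorial : ℝ) * (P2 e0.1).coeff (d2 e0.1) =
              -(((d e0.1).factorial : ℝ) * (p e0.1).coeff (d e0.1)) := by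
            rw [hP2def, hd2def, Function.update_self, Function.update_self]
            rw [Polynomial.coeff_sub,
              taylor_coeff_pred (p e0.1) 1 (d e0.1) (hdeg _) (by omega)]
            have hfac : ((d e0.1 - 1).factorial : ℝ) * (d e0.1) = (d e0.1).factorial := by
              rw [← Nat.mul_factorial_pred hds]
              push_cast; ring
            linear_combination -(p e0.1).coeff (d e0.1) * hfac
          rw [hhead]
          ring
        have hcoeff2 : MvPolynomial.coeff (Finsupp.equivFunOnFinite.symm d)
            (Q * MvPolynomial.X e0.1) =
            MvPolynomial.coeff (Finsupp.equivFunOnFinite.symm d2) Q := by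
          rw [MvPolynomial.coeff_mul_X', if_pos]
          · congr 1
            ext i
            rw [Finsupp.tsub_apply]
            rcases eq_or_ne i e0.1 with rfl | hne
            · simp [hd2def, Finsupp.single_apply]
            · simp [hd2def, Finsupp.single_apply, Ne.symm hne, Function.update_of_ne hne]
          · simp [Finsupp.mem_support_iff, hds]
        rw [hKP2, hcoeff2]
        ring
    rw [Finset.sum_powerset_insert he0, hL, hS1, hS2, hcard, Finset.prod_insert he0]
    have hQ2 : (MvPolynomial.X e0.1 - MvPolynomial.X e0.2 : MvPolynomial (Fin n) ℝ) * Q =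
        Q * MvPolynomial.X e0.1 - Q * MvPolynomial.X e0.2 := by ring
    rw [hQ2, MvPolynomial.coeff_sub, pow_succ]
    ring

/-- Generalized Alon–Tarsi characterization with arbitrary weights: for an orientation `D` of `G`
with out-degrees `d` and arbitrary reals `u i j` (`j ∈ {0,…,dᵢ-1}` standing for `u^i_1,…,u^i_{dᵢ}`),
the coefficient of `∏ xᵢ^{dᵢ}` in `P_G` is non-zero iff
`∑_{A ⊆ E(D)} (-1)^{|A|} ∏ᵢ ∏ⱼ ((d_A⁺(vᵢ) - d_A⁻(vᵢ)) - u^i_j) ≠ 0`. -/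
theorem alon_tarsi_weighted (n : ℕ) (G : SimpleGraph (Fin n)) [DecidableRel G.Adj]
    (D : Finset (Fin n × Fin n))
    (hD1 : ∀ e ∈ D, G.Adj e.1 e.2)
    (hD2 : ∀ i j, G.Adj i j → ((i, j) ∈ D ∨ (j, i) ∈ D))
    (hD3 : ∀ i j, (i, j) ∈ D → (j, i) ∉ D)
    (d : Fin n → ℕ) (hd : ∀ v, outdeg D v = d v)
    (u : Fin n → ℕ → ℝ) :
    (graphPoly G).coeff (Finsupp.equivFunOnFinite.symm d) ≠ 0 ↔
      ∑ A ∈ D.powerset, (-1 : ℝ) ^ A.card *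
        ∏ i, ∏ j ∈ Finset.range (d i),
          (((outdeg A i : ℝ) - (indeg A i : ℝ)) - u i j) ≠ 0 := by
  classical
  have hE : ∀ e ∈ D, e.1 ≠ e.2 := fun e he => (hD1 e he).ne
  have hsum : ∑ i, d i = D.card := by
    have h := Finset.card_eq_sum_card_fiberwise
      (f := Prod.fst) (s := D) (t := Finset.univ) (fun x _ => Finset.mem_univ _)
    calc ∑ i, d i = ∑ i, outdeg D i := by
          refine Finset.sum_congr rfl fun i _ => (hd i).symm
      _ = D.card := by unfold outdeg; exact h.symm
  set p : Fin n → Polynomial ℝ :=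
    fun i => ∏ j ∈ Finset.range (d i), (Polynomial.X - Polynomial.C (u i j)) with hpdef
  have hmon : ∀ i, (p i).Monic :=
    fun i => Polynomial.monic_prod_of_monic _ _ fun j _ => Polynomial.monic_X_sub_C _
  have hdegp : ∀ i, (p i).natDegree = d i := by
    intro i
    rw [hpdef]
    rw [Polynomial.natDegree_prod_of_monic _ _ fun j _ => Polynomial.monic_X_sub_C _]
    simp [Polynomial.natDegree_X_sub_C]
  have hco : ∀ i, (p i).coeff (d i) = 1 := fun i => by
    rw [← hdegp i]; exact (hmon i).coeff_natDegree
  have hmaster := master D hE p d (fun i => le_of_eq (hdegp i)) hsum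
  have heval : ∀ (A : Finset (Fin n × Fin n)) (i : Fin n),
      (p i).eval ((outdeg A i : ℝ) - (indeg A i : ℝ)) =
      ∏ j ∈ Finset.range (d i), (((outdeg A i : ℝ) - (indeg A i : ℝ)) - u i j) := by
    intro A i
    rw [hpdef]
    rw [Polynomial.eval_prod]
    exact Finset.prod_congr rfl fun j _ => by
      rw [Polynomial.eval_sub, Polynomial.eval_X, Polynomial.eval_C]
  simp only [heval] at hmaster
  -- relate the oriented product to the graph polynomial
  set k : ℕ := (D.filter fun e => e.2 < e.1).card with hkdef
  have hQG : (∏ e ∈ D, (MvPolynomial.X e.1 - MvPolynomial.X e.2 : MvPolynomial (Fin n) ℝ)) =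
      MvPolynomial.C ((-1 : ℝ)^k) * graphPoly G := by
    have hsplitD : (∏ e ∈ D, (MvPolynomial.X e.1 - MvPolynomial.X e.2 : MvPolynomial (Fin n) ℝ)) =
        (∏ e ∈ D.filter (fun e => e.1 < e.2), (MvPolynomial.X e.1 - MvPolynomial.X e.2)) *
        (∏ e ∈ D.filter (fun e => e.2 < e.1), (MvPolynomial.X e.1 - MvPolynomial.X e.2)) := by
      rw [← Finset.prod_filter_mul_prod_filter_not D (fun e => e.1 < e.2)]
      congr 2
      refine Finset.filter_congr fun e he => ?_
      constructor
      · intro h; exact lt_of_le_of_ne (le_of_not_gt h) (hE e he).symm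
      · intro h; exact not_lt_of_gt h
    have himg : (∏ e ∈ D.filter (fun e => e.2 < e.1),
          (MvPolynomial.X e.1 - MvPolynomial.X e.2 : MvPolynomial (Fin n) ℝ)) =
        MvPolynomial.C ((-1 : ℝ)^k) *
        ∏ q ∈ (D.filter (fun e => e.2 < e.1)).image Prod.swap,
          (MvPolynomial.X q.1 - MvPolynomial.X q.2) := by
      rw [Finset.prod_image (fun x _ y _ h => Prod.swap_injective h)]
      have hfac : ∀ e ∈ D.filter (fun e => e.2 < e.1),
          (MvPolynomial.X e.1 - MvPolynomial.X e.2 : MvPolynomial (Fin n) ℝ) =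
          (-1) * (MvPolynomial.X e.swap.1 - MvPolynomial.X e.swap.2) := by
        intro e _
        simp only [Prod.fst_swap, Prod.snd_swap]
        ring
      rw [Finset.prod_congr rfl hfac, Finset.prod_mul_distrib, Finset.prod_const]
      congr 1
      rw [hkdef, map_pow]
      simp
    have hunion : D.filter (fun e => e.1 < e.2) ∪
        (D.filter (fun e => e.2 < e.1)).image Prod.swap =
        Finset.univ.filter (fun q : Fin n × Fin n => q.1 < q.2 ∧ G.Adj q.1 q.2) := by
      ext q
      simp only [Finset.mem_union, Finset.mem_image, Finset.mem_filter, Finset.mem_univ,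
        true_and]
      constructor
      · rintro (⟨hqD, hlt⟩ | ⟨a, ⟨haD, hlt⟩, rfl⟩)
        · exact ⟨hlt, hD1 q hqD⟩
        · exact ⟨hlt, (hD1 a haD).symm⟩
      · rintro ⟨hlt, hadj⟩
        rcases hD2 q.1 q.2 hadj with h | h
        · left; exact ⟨by simpa using h, hlt⟩
        · right
          exact ⟨(q.2, q.1), ⟨h, by simpa using hlt⟩, by simp⟩
    have hdisj : Disjoint (D.filter (fun e => e.1 < e.2))
        ((D.filter (fun e => e.2 < e.1)).image Prod.swap) := by
      rw [Finset.disjoint_left]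
      rintro q hq1 hq2
      obtain ⟨a, ha, rfl⟩ := Finset.mem_image.1 hq2
      have haD : a ∈ D := (Finset.mem_filter.1 ha).1
      have hq : a.swap ∈ D := (Finset.mem_filter.1 hq1).1
      exact hD3 a.1 a.2 (by simpa using haD) hq
    rw [hsplitD, himg, graphPoly, ← hunion, Finset.prod_union hdisj]
    ring
  rw [hQG, MvPolynomial.coeff_C_mul] at hmaster
  simp only [hco, mul_one] at hmaster
  rw [hmaster]
  have h1 : ((-1 : ℝ))^D.card ≠ 0 := by positivity
  have h2 : (∏ i, ((d i).factorial : ℝ)) ≠ 0 := by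
    refine Finset.prod_ne_zero_iff.2 fun i _ => ?_
    exact_mod_cast (d i).factorial_ne_zero
  have h3 : ((-1 : ℝ))^k ≠ 0 := by positivity
  constructor
  · intro h
    exact mul_ne_zero (mul_ne_zero h1 h2) (mul_ne_zero h3 h)
  · intro h hc
    rw [hc, mul_zero, mul_zero] at h
    exact h rfl
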